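/- With the degree function d on GL_n(ℤ) defined via reduced stochastic log-matrices, if P is a permutation matrix in GL_n(ℤ) arising from the action of S_{n+1} on the coordinates (i.e., an element of the image of the embedding S_{n+1} → GL_n(ℤ) given by permuting the vectors e₁−e₀, …, eₙ−e₀ where the eᵢ are permuted), then d(PgQ) = d(g) for all g ∈ GL_n(ℤ) and all P, Q in this subgroup. -/

import Mathlib

/-- The (n+1)×(n+1) zero-column-sum extension of an n×n integer matrix g. -/
def Mg {n : ℕ} (g : Matrix (Fin n) (Fin n) ℤ) : Matrix (Fin (n + 1)) (Fin (n + 1)) ℤ :=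
  Matrix.of fun i j =>
    if hj : j.val = 0 then 0
    else if hi : i.val = 0 then
      -∑ k : Fin n, g k ⟨j.val - 1, by have := j.isLt; omega⟩
    else g ⟨i.val - 1, by have := i.isLt; omega⟩ ⟨j.val - 1, by have := j.isLt; omega⟩

/-- The degree of the monomial Cremona transformation associated to g. -/
def cremonaDeg {n : ℕ} (g : Matrix (Fin n) (Fin n) ℤ) : ℤ :=
  ∑ i : Fin (n + 1), max 0 (-(Finset.univ.inf' Finset.univ_nonempty (Mg g i)))

/-- The matrix in GL_n(ℤ) of the automorphism of Λ₀ induced by a permutation σ of the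
n+1 coordinates, in the basis (e₁−e₀, …, eₙ−e₀): it sends eⱼ−e₀ to e_{σ(j)}−e_{σ(0)}. -/
def permMat {n : ℕ} (σ : Equiv.Perm (Fin (n + 1))) : Matrix (Fin n) (Fin n) ℤ :=
  Matrix.of fun i j =>
    (if σ j.succ = i.succ then 1 else 0) - (if σ 0 = i.succ then 1 else 0)

section Aux

variable {n : ℕ}

lemma Mg_col0 (A : Matrix (Fin n) (Fin n) ℤ) (i : Fin (n + 1)) : Mg A i 0 = 0 := by
  simp [Mg]

lemma Mg_succ_succ (A : Matrix (Fin n) (Fin n) ℤ) (a b : Fin n) :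
    Mg A a.succ b.succ = A a b := by
  simp [Mg, Fin.val_succ]

lemma Mg_zero_succ (A : Matrix (Fin n) (Fin n) ℤ) (b : Fin n) :
    Mg A 0 b.succ = -∑ k : Fin n, A k b := by
  simp [Mg, Fin.val_succ]

lemma Mg_colsum (A : Matrix (Fin n) (Fin n) ℤ) (j : Fin (n + 1)) :
    ∑ i, Mg A i j = 0 := by
  induction j using Fin.cases with
  | zero => simp [Mg_col0]
  | succ b =>
    rw [Fin.sum_univ_succ]
    simp [Mg_zero_succ, Mg_succ_succ]

lemma Mg_mul (A B : Matrix (Fin n) (Fin n) ℤ) : Mg (A * B) = Mg A * Mg B := by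
  ext i j
  induction j using Fin.cases with
  | zero => simp [Matrix.mul_apply, Mg_col0]
  | succ b =>
    induction i using Fin.cases with
    | zero =>
      rw [Matrix.mul_apply, Fin.sum_univ_succ]
      simp only [Mg_col0, Mg_zero_succ, Mg_succ_succ, Matrix.mul_apply, zero_mul,
        zero_add, neg_mul, Finset.sum_neg_distrib, Finset.sum_mul]
      rw [Finset.sum_comm]
    | succ a =>
      rw [Matrix.mul_apply, Fin.sum_univ_succ]
      simp [Mg_col0, Mg_succ_succ, Matrix.mul_apply]

lemma sum_ind (c : Fin (n + 1)) :
    ∑ a : Fin n, (if c = a.succ then (1 : ℤ) else 0) = if c = 0 then 0 else 1 := by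
  induction c using Fin.cases with
  | zero => simp [(Fin.succ_ne_zero _).symm]
  | succ m => simp [Fin.succ_inj, Fin.succ_ne_zero]

lemma Mg_perm (σ : Equiv.Perm (Fin (n + 1))) (i j : Fin (n + 1)) :
    Mg (permMat σ) i j =
      if j = 0 then 0 else (if σ j = i then 1 else 0) - (if σ 0 = i then 1 else 0) := by
  induction j using Fin.cases with
  | zero => simp [Mg_col0]
  | succ b =>
    rw [if_neg (Fin.succ_ne_zero b)]
    induction i using Fin.cases with
    | zero =>
      rw [Mg_zero_succ]
      have : ∀ a : Fin n, permMat σ a b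
          = (if σ b.succ = a.succ then (1:ℤ) else 0) - (if σ 0 = a.succ then 1 else 0) := by
        intro a; rfl
      simp_rw [this]
      rw [Finset.sum_sub_distrib, sum_ind, sum_ind]
      by_cases h1 : σ b.succ = 0 <;> by_cases h2 : σ 0 = 0 <;> simp [h1, h2]
    | succ a =>
      rw [Mg_succ_succ]
      rfl

lemma left_mul (σ : Equiv.Perm (Fin (n + 1))) (M : Matrix (Fin (n + 1)) (Fin (n + 1)) ℤ)
    (hM : ∀ j, ∑ k, M k j = 0) (i j : Fin (n + 1)) :
    (Mg (permMat σ) * M) i j = M (σ⁻¹ i) j := by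
  rw [Matrix.mul_apply]
  have h1 : ∀ k, Mg (permMat σ) i k * M k j
      = ((if σ k = i then (1 : ℤ) else 0) - (if σ 0 = i then 1 else 0)) * M k j := by
    intro k
    rw [Mg_perm]
    by_cases hk : k = 0
    · subst hk; simp
    · rw [if_neg hk]
  simp_rw [h1, sub_mul, Finset.sum_sub_distrib, ite_mul, one_mul, zero_mul]
  have h2 : ∀ k : Fin (n+1), (σ k = i) = (k = σ⁻¹ i) := by
    intro k
    simp [Equiv.apply_eq_iff_eq_symm_apply, Equiv.Perm.inv_def]
  simp_rw [h2]
  rw [Finset.sum_ite_eq' Finset.univ (σ⁻¹ i) (fun k => M k j)]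
  by_cases h0 : (0 : Fin (n + 1)) = σ⁻¹ i <;> simp [h0, hM j]

lemma right_mul (τ : Equiv.Perm (Fin (n + 1))) (M : Matrix (Fin (n + 1)) (Fin (n + 1)) ℤ)
    (i j : Fin (n + 1)) :
    (M * Mg (permMat τ)) i j = M i (τ j) - M i (τ 0) := by
  rw [Matrix.mul_apply]
  by_cases hj : j = 0
  · subst hj
    simp [Mg_col0]
  · simp_rw [Mg_perm, if_neg hj, mul_sub, Finset.sum_sub_distrib, mul_ite, mul_one, mul_zero]
    congr 1
    · rw [Finset.sum_ite_eq Finset.univ (τ j) (fun k => M i k), if_pos (Finset.mem_univ _)]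
    · rw [Finset.sum_ite_eq Finset.univ (τ 0) (fun k => M i k), if_pos (Finset.mem_univ _)]

lemma colsum_mul (M N : Matrix (Fin (n + 1)) (Fin (n + 1)) ℤ)
    (hM : ∀ j, ∑ k, M k j = 0) (j : Fin (n + 1)) : ∑ i, (M * N) i j = 0 := by
  simp_rw [Matrix.mul_apply]
  rw [Finset.sum_comm]
  simp_rw [← Finset.sum_mul]
  simp [hM]

lemma key (σ τ : Equiv.Perm (Fin (n + 1))) (A : Matrix (Fin n) (Fin n) ℤ)
    (i j : Fin (n + 1)) :
    Mg (permMat σ * A * permMat τ) i j = Mg A (σ⁻¹ i) (τ j) - Mg A (σ⁻¹ i) (τ 0) := by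
  rw [Mg_mul, Mg_mul, Matrix.mul_assoc,
    left_mul σ _ (fun j => colsum_mul _ _ (Mg_colsum A) j) i j, right_mul]

lemma inf'_row (σ τ : Equiv.Perm (Fin (n + 1))) (A : Matrix (Fin n) (Fin n) ℤ)
    (i : Fin (n + 1)) :
    Finset.univ.inf' Finset.univ_nonempty (Mg (permMat σ * A * permMat τ) i)
      = Finset.univ.inf' Finset.univ_nonempty (Mg A (σ⁻¹ i)) - Mg A (σ⁻¹ i) (τ 0) := by
  apply le_antisymm
  · obtain ⟨j0, -, hj0⟩ := Finset.exists_mem_eq_inf' (Finset.univ_nonempty)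
      (Mg A (σ⁻¹ i))
    have h := Finset.inf'_le (b := τ⁻¹ j0) (f := Mg (permMat σ * A * permMat τ) i)
      (Finset.mem_univ _)
    rw [key] at h; simp only [Equiv.Perm.coe_inv, Equiv.apply_symm_apply] at h
    rw [hj0]
    exact h
  · apply Finset.le_inf'
    intro j _
    rw [key]
    exact sub_le_sub_right (Finset.inf'_le _ (Finset.mem_univ (τ j))) _

end Aux

/-- d is constant on double cosets of the embedded S_{n+1}:
d(PgQ) = d(g) for permutation matrices P, Q. -/
theorem stmt7 (n : ℕ) (hn : 2 ≤ n) (σ τ : Equiv.Perm (Fin (n + 1)))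
    (g : GL (Fin n) ℤ) :
    cremonaDeg (permMat σ * (g : Matrix (Fin n) (Fin n) ℤ) * permMat τ) =
      cremonaDeg (g : Matrix (Fin n) (Fin n) ℤ) := by
  set A : Matrix (Fin n) (Fin n) ℤ := (g : Matrix (Fin n) (Fin n) ℤ) with hA
  have hinf0 : ∀ r : Fin (n + 1),
      Finset.univ.inf' Finset.univ_nonempty (Mg A r) ≤ 0 := by
    intro r
    have := Finset.inf'_le (f := Mg A r) (Finset.mem_univ (0 : Fin (n + 1)))
    rwa [Mg_col0] at this
  unfold cremonaDeg
  have hterm : ∀ i : Fin (n + 1),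
      max 0 (-(Finset.univ.inf' Finset.univ_nonempty (Mg (permMat σ * A * permMat τ) i)))
        = Mg A (σ⁻¹ i) (τ 0) - Finset.univ.inf' Finset.univ_nonempty (Mg A (σ⁻¹ i)) := by
    intro i
    rw [inf'_row, neg_sub]
    apply max_eq_right
    have := Finset.inf'_le (f := Mg A (σ⁻¹ i)) (Finset.mem_univ (τ 0))
    omega
  simp_rw [hterm]
  have hre : ∑ i : Fin (n + 1),
      (Mg A (σ⁻¹ i) (τ 0) - Finset.univ.inf' Finset.univ_nonempty (Mg A (σ⁻¹ i)))
      = ∑ r : Fin (n + 1),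
      (Mg A r (τ 0) - Finset.univ.inf' Finset.univ_nonempty (Mg A r)) :=
    Fintype.sum_equiv σ.symm _ _ (fun i => rfl)
  rw [hre, Finset.sum_sub_distrib, Mg_colsum A (τ 0), zero_sub]
  rw [← Finset.sum_neg_distrib]
  apply Finset.sum_congr rfl
  intro r _
  rw [max_eq_right (by have := hinf0 r; omega)]
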